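/- Let a > 0, c > 0, h > 0 and σ ∈ ℝ with a + σ > 0. Then every continuous solution v : [−h, ∞) → ℝ of the constant-coefficient delay logistic equation v′(t) = a v(t−h) + σ v(t) − c v(t)² (t > 0) with continuous nonnegative initial function φ on [−h, 0] satisfying φ(0) > 0 remains positive for t > 0 and converges: v(t) → (a + σ)/c as t → ∞. In particular, (a+σ)/c is the unique positive equilibrium of this equation. -/

import Mathlib

open Filter Set Topology

private lemma no_upcross (v D : ℝ → ℝ) (T₀ T M : ℝ) (hT₀ : T₀ ≤ T)
    (hcont : ContinuousOn v (Ici T₀))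
    (hd : ∀ t, T < t → HasDerivAt v (D t) t)
    (hinit : ∀ t ∈ Icc T₀ T, v t < M)
    (hbar : ∀ t, T < t → (∀ s ∈ Ico T₀ t, v s < M) → v t = M → D t < 0) :
    ∀ t, T₀ ≤ t → v t < M := by
  by_contra hcon
  push_neg at hcon
  obtain ⟨t₁, ht₁, hMt₁⟩ := hcon
  set S : Set ℝ := Ici T₀ ∩ v ⁻¹' (Ici M) with hS
  have hSne : S.Nonempty := ⟨t₁, ht₁, hMt₁⟩
  have hSbdd : BddBelow S := ⟨T₀, fun x hx => hx.1⟩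
  have hScl : IsClosed S :=
    hcont.preimage_isClosed_of_isClosed isClosed_Ici isClosed_Ici
  set t₂ := sInf S with ht₂def
  have ht₂S : t₂ ∈ S := hScl.csInf_mem hSne hSbdd
  have ht₂0 : T₀ ≤ t₂ := ht₂S.1
  have hMle : M ≤ v t₂ := ht₂S.2
  have ht₂T : T < t₂ := by
    by_contra hle
    push_neg at hle
    exact absurd hMle (not_le.2 (hinit t₂ ⟨ht₂0, hle⟩))
  have hbefore : ∀ s ∈ Ico T₀ t₂, v s < M := by
    intro s hs
    by_contra hge
    push_neg at hge
    exact absurd (csInf_le hSbdd ⟨hs.1, hge⟩) (not_le.2 hs.2)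
  -- v t₂ = M via left continuity
  have hcontAt : ContinuousAt v t₂ := by
    have : Ici T₀ ∈ 𝓝 t₂ := Ici_mem_nhds (lt_of_le_of_lt hT₀ ht₂T)
    exact hcont.continuousAt this
  have hleft : Tendsto v (𝓝[<] t₂) (𝓝 (v t₂)) :=
    (hcontAt.tendsto).mono_left nhdsWithin_le_nhds
  have hIoo : Ioo T t₂ ∈ 𝓝[<] t₂ := Ioo_mem_nhdsLT_of_mem ⟨ht₂T, le_refl _⟩
  have hvle : v t₂ ≤ M := by
    refine le_of_tendsto hleft ?_
    filter_upwards [hIoo] with s hs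
    exact (hbefore s ⟨le_trans hT₀ hs.1.le, hs.2⟩).le
  have hveq : v t₂ = M := le_antisymm hvle hMle
  have hDneg : D t₂ < 0 := hbar t₂ ht₂T hbefore hveq
  -- slope from left nonneg
  have hslope : Tendsto (slope v t₂) (𝓝[<] t₂) (𝓝 (D t₂)) :=
    (hasDerivAt_iff_tendsto_slope.1 (hd t₂ ht₂T)).mono_left
      (nhdsWithin_mono _ (fun x hx => ne_of_lt hx))
  have hD0 : (0:ℝ) ≤ D t₂ := by
    refine ge_of_tendsto hslope ?_
    filter_upwards [hIoo] with s hs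
    have h1 : v s - v t₂ < 0 := by
      have := hbefore s ⟨le_trans hT₀ hs.1.le, hs.2⟩
      rw [hveq]; linarith
    have h2 : s - t₂ < 0 := by linarith [hs.2]
    rw [slope_def_field]
    exact (div_pos_of_neg_of_neg h1 h2).le
  linarith


private lemma no_downcross (v D : ℝ → ℝ) (T₀ T m : ℝ) (hT₀ : T₀ ≤ T)
    (hcont : ContinuousOn v (Ici T₀))
    (hd : ∀ t, T < t → HasDerivAt v (D t) t)
    (hinit : ∀ t ∈ Icc T₀ T, m < v t)
    (hbar : ∀ t, T < t → (∀ s ∈ Ico T₀ t, m < v s) → v t = m → 0 < D t) :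
    ∀ t, T₀ ≤ t → m < v t := by
  have h := no_upcross (fun t => -v t) (fun t => -D t) T₀ T (-m) hT₀
    (hcont.neg)
    (fun t ht => (hd t ht).neg)
    (fun t ht => by simpa using hinit t ht)
    (fun t ht hs he => by
      have : 0 < D t := hbar t ht (fun s hs' => by simpa using hs s hs')
        (by linarith [neg_eq_iff_eq_neg.2 he.symm] ; )
      simpa using this)
  intro t ht
  have := h t ht
  simpa using this

private lemma eventually_below (v D : ℝ → ℝ) (T M B₁ η : ℝ)
    (hMB : M < B₁) (hη : 0 < η)
    (hcont : ContinuousOn v (Ici T))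
    (hd : ∀ t, T < t → HasDerivAt v (D t) t)
    (hB : ∀ t, T ≤ t → v t < B₁)
    (hD : ∀ t, T < t → M ≤ v t → D t ≤ -η) :
    ∀ᶠ t in atTop, v t < M := by
  set t₂ := T + 1 + (B₁ - M) / η with ht₂
  have hlen : (0:ℝ) < (B₁ - M) / η := div_pos (by linarith) hη
  have hTt₂ : T + 1 ≤ t₂ := by rw [ht₂]; linarith
  -- step 1 : some point in [T+1, t₂] is below M
  have hstep1 : ∃ t₁ ∈ Icc (T+1) t₂, v t₁ < M := by
    by_contra hcon
    push_neg at hcon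
    -- v ≥ M on [T+1, t₂], so derivative ≤ -η there
    have hanti : AntitoneOn (fun t => v t + η * t) (Icc (T+1) t₂) := by
      apply antitoneOn_of_deriv_nonpos (convex_Icc _ _)
      · exact (hcont.mono (Icc_subset_Ici_self.trans (by
          intro x hx; exact le_trans (by linarith : T ≤ T + 1) hx))).add
          (continuous_const.mul continuous_id).continuousOn
      · intro x hx
        rw [interior_Icc] at hx
        exact ((hd x (by linarith [hx.1])).add
          ((hasDerivAt_id x).const_mul η)).differentiableAt.differentiableWithinAt
      · intro x hx
        rw [interior_Icc] at hx
        have hdx : HasDerivAt (fun t => v t + η * t) (D x + η * 1) x :=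
          (hd x (by linarith [hx.1])).add ((hasDerivAt_id x).const_mul η)
        rw [hdx.deriv]
        have := hD x (by linarith [hx.1]) (hcon x ⟨hx.1.le, hx.2.le⟩)
        linarith
    have h1 := hanti (left_mem_Icc.2 hTt₂) (right_mem_Icc.2 hTt₂) hTt₂
    simp only at h1
    have hB1 : v (T+1) < B₁ := hB (T+1) (by linarith)
    have hfield : η * t₂ = η * (T+1) + (B₁ - M) := by
      rw [ht₂, mul_add, mul_div_cancel₀ (B₁ - M) hη.ne']
    have : v t₂ < M := by nlinarith
    exact absurd this (not_lt.2 (hcon t₂ (right_mem_Icc.2 hTt₂)))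
  obtain ⟨t₁, ht₁mem, ht₁⟩ := hstep1
  have hT₁ : T < t₁ := by linarith [ht₁mem.1]
  have hall : ∀ t, t₁ ≤ t → v t < M := by
    apply no_upcross v D t₁ t₁ M le_rfl
      (hcont.mono (by intro x hx; exact le_trans hT₁.le hx))
      (fun t ht => hd t (lt_trans hT₁ ht))
      (fun t ht => by rw [Icc_self] at ht; rw [ht]; exact ht₁)
    intro t ht _ hveq
    have := hD t (lt_trans hT₁ ht) (le_of_eq hveq.symm)
    linarith
  exact eventually_atTop.2 ⟨t₁, hall⟩

private lemma eventually_above (v D : ℝ → ℝ) (T m b₁ η : ℝ)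
    (hmb : b₁ < m) (hη : 0 < η)
    (hcont : ContinuousOn v (Ici T))
    (hd : ∀ t, T < t → HasDerivAt v (D t) t)
    (hB : ∀ t, T ≤ t → b₁ < v t)
    (hD : ∀ t, T < t → v t ≤ m → η ≤ D t) :
    ∀ᶠ t in atTop, m < v t := by
  have h := eventually_below (fun t => -v t) (fun t => -D t) T (-m) (-b₁) η
    (by linarith) hη hcont.neg (fun t ht => (hd t ht).neg)
    (fun t ht => by simpa using hB t ht)
    (fun t ht hm => by
      have hvm : v t ≤ m := by simpa using neg_le_neg_iff.2 hm
      have := hD t ht hvm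
      show -D t ≤ -η
      linarith)
  filter_upwards [h] with t ht
  simpa using ht


section Fmap
variable (a c σ : ℝ)

noncomputable def Fm (x : ℝ) : ℝ := (σ + Real.sqrt (σ^2 + 4*a*c*x)) / (2*c)

variable {a c σ} (ha : 0 < a) (hc : 0 < c) (haσ : 0 < a + σ)
include ha hc

private lemma sqrt_fact {x : ℝ} (hx : 0 < x) :
    0 ≤ Real.sqrt (σ^2 + 4*a*c*x) ∧ (Real.sqrt (σ^2 + 4*a*c*x))^2 = σ^2 + 4*a*c*x ∧
      -σ < Real.sqrt (σ^2 + 4*a*c*x) := by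
  have harg : (0:ℝ) ≤ σ^2 + 4*a*c*x := by nlinarith [sq_nonneg σ, mul_pos (mul_pos ha hc) hx]
  refine ⟨Real.sqrt_nonneg _, Real.sq_sqrt harg, ?_⟩
  rcases le_or_gt (-σ) 0 with h | h
  · exact lt_of_le_of_lt h (Real.sqrt_pos.2 (by nlinarith [mul_pos (mul_pos ha hc) hx]))
  · rw [Real.lt_sqrt h.le]
    have hns : (-σ)^2 = σ^2 := by ring
    nlinarith [mul_pos (mul_pos ha hc) hx, hns]

private lemma Fm_pos {x : ℝ} (hx : 0 < x) : 0 < Fm a c σ x := by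
  obtain ⟨h0, h2, h3⟩ := sqrt_fact ha hc (σ := σ) hx
  unfold Fm
  apply div_pos (by linarith) (by linarith)

private lemma Fm_mono {x y : ℝ} (hxy : x ≤ y) : Fm a c σ x ≤ Fm a c σ y := by
  unfold Fm
  apply div_le_div_of_nonneg_right ?_ (by linarith)
  have := Real.sqrt_le_sqrt (show σ^2 + 4*a*c*x ≤ σ^2 + 4*a*c*y by
    nlinarith [mul_nonneg (mul_nonneg ha.le hc.le) (sub_nonneg.2 hxy)])
  linarith

private lemma Fm_cont : Continuous (Fm a c σ) := by
  unfold Fm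
  fun_prop

include haσ

private lemma Fm_fixed : Fm a c σ ((a+σ)/c) = (a+σ)/c := by
  unfold Fm
  have h1 : σ^2 + 4*a*c*((a+σ)/c) = (σ + 2*a)^2 := by field_simp; ring
  rw [h1, Real.sqrt_sq (by linarith)]
  field_simp; ring

private lemma Fm_le_self {x : ℝ} (hx : (a+σ)/c ≤ x) : Fm a c σ x ≤ x := by
  have hxpos : 0 < x := lt_of_lt_of_le (div_pos haσ hc) hx
  obtain ⟨h0, h2, h3⟩ := sqrt_fact ha hc (σ := σ) hxpos
  have hr : 0 < 2*c*x - σ := by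
    have h' := (div_le_iff₀ hc).1 hx
    nlinarith
  have hs : Real.sqrt (σ^2 + 4*a*c*x) ≤ 2*c*x - σ := by
    have hsq : σ^2 + 4*a*c*x ≤ (2*c*x - σ)^2 := by
      have h' := (div_le_iff₀ hc).1 hx
      nlinarith
    nlinarith [h2, h0]
  unfold Fm
  rw [div_le_iff₀ (by linarith)]
  linarith

private lemma self_le_Fm {x : ℝ} (hx0 : 0 < x) (hx : x ≤ (a+σ)/c) : x ≤ Fm a c σ x := by
  obtain ⟨h0, h2, h3⟩ := sqrt_fact ha hc (σ := σ) hx0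
  have hcx := (le_div_iff₀ hc).1 hx
  have hs : 2*c*x - σ ≤ Real.sqrt (σ^2 + 4*a*c*x) := by
    rcases le_or_gt (2*c*x - σ) 0 with h | h
    · linarith
    · nlinarith [h2, h0]
  unfold Fm
  rw [le_div_iff₀ (by linarith)]
  linarith

private lemma Fm_fixed_unique {L : ℝ} (hL : 0 < L) (hfix : Fm a c σ L = L) :
    L = (a+σ)/c := by
  obtain ⟨h0, h2, h3⟩ := sqrt_fact ha hc (σ := σ) hL
  have hs : Real.sqrt (σ^2 + 4*a*c*L) = 2*c*L - σ := by
    unfold Fm at hfix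
    field_simp at hfix
    linarith
  have : 4*a*c*L = 4*c^2*L^2 - 4*c*σ*L := by nlinarith [h2, hs]
  have hcL : c * L = a + σ := by nlinarith [mul_pos hc hL]
  field_simp
  linarith [hcL]

end Fmap




private lemma step_up (a c h σ : ℝ) (ha : 0 < a) (hc : 0 < c) (hh : 0 < h)
    (v : ℝ → ℝ) (hvc : ContinuousOn v (Ici (-h)))
    (hv : ∀ s : ℝ, 0 < s → HasDerivAt v (a * v (s - h) + σ * v s - c * v s ^ 2) s)
    (K ε : ℝ) (hK : 0 < K) (hε : 0 < ε)
    (hvK : ∀ᶠ t in atTop, v t < K) :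
    ∀ᶠ t in atTop, v t < Fm a c σ K + ε := by
  have hs0' : 0 ≤ Real.sqrt (σ^2 + 4*a*c*K) := Real.sqrt_nonneg _
  have hs2' : (Real.sqrt (σ^2 + 4*a*c*K))^2 = σ^2 + 4*a*c*K :=
    Real.sq_sqrt (by nlinarith [sq_nonneg σ, mul_pos (mul_pos ha hc) hK])
  have hFm : Fm a c σ K = (σ + Real.sqrt (σ^2 + 4*a*c*K)) / (2*c) := rfl
  obtain ⟨s, hs⟩ : ∃ s, Real.sqrt (σ^2 + 4*a*c*K) = s := ⟨_, rfl⟩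
  rw [hs] at hs0' hs2' hFm
  rw [hFm]
  obtain ⟨M, hMdef⟩ : ∃ x : ℝ, x = (σ + s) / (2*c) + ε := ⟨_, rfl⟩
  rw [← hMdef]
  have hM : 2*c*M = σ + s + 2*c*ε := by rw [hMdef]; field_simp
  rcases le_or_gt K M with hKM | hMK
  · filter_upwards [hvK] with t ht; linarith
  · obtain ⟨T₀, hT₀⟩ := eventually_atTop.1 hvK
    obtain ⟨T, hTdef⟩ : ∃ x : ℝ, x = max T₀ 0 + h := ⟨_, rfl⟩
    have hT0 : 0 ≤ T := by rw [hTdef]; positivity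
    obtain ⟨η, hηdef⟩ : ∃ x : ℝ, x = ε * (s + c*ε) := ⟨_, rfl⟩
    have hη : 0 < η := by rw [hηdef]; positivity
    apply eventually_below v (fun t => a * v (t - h) + σ * v t - c * v t ^ 2) T M K η hMK hη
    · exact hvc.mono (fun x hx => le_trans (by rw [hTdef]; linarith [le_max_right T₀ (0:ℝ)] : -h ≤ T) hx)
    · intro t ht
      exact hv t (lt_of_le_of_lt hT0 ht)
    · intro t ht
      exact hT₀ t (by rw [hTdef] at ht; linarith [le_max_left T₀ (0:ℝ)])
    · intro t ht hMt
      have hdel : v (t - h) < K := hT₀ (t - h) (by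
        rw [hTdef] at ht
        have : max T₀ 0 < t - h := by linarith
        linarith [le_max_left T₀ (0:ℝ)])
      have hq : c*M^2 - σ*M - a*K = ε*(s + c*ε) := by
        have hsM : s = 2*c*M - σ - 2*c*ε := by linarith
        rw [hsM] at hs2'
        have hq4 : (4*c) * (c*M^2 - σ*M - a*K) = (4*c) * (ε*(s + c*ε)) := by
          rw [hsM]; linear_combination hs2'
        exact mul_left_cancel₀ (by positivity) hq4
      have he1 : 0 ≤ (v t - M) * (c*(v t + M) - σ) :=
        mul_nonneg (by linarith) (by nlinarith)
      have he2 : a * v (t - h) < a * K := mul_lt_mul_of_pos_left hdel ha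
      show a * v (t - h) + σ * v t - c * v t ^ 2 ≤ -η
      nlinarith [hq, he1, he2]

private lemma step_down (a c h σ : ℝ) (ha : 0 < a) (hc : 0 < c) (hh : 0 < h)
    (v : ℝ → ℝ) (hvc : ContinuousOn v (Ici (-h)))
    (hv : ∀ s : ℝ, 0 < s → HasDerivAt v (a * v (s - h) + σ * v s - c * v s ^ 2) s)
    (δ : ℝ) (hδ : 0 < δ) (hvδ : ∀ t, 0 ≤ t → δ ≤ v t)
    (k ε : ℝ) (hk : 0 < k) (hε : 0 < ε)
    (hεs : c * ε < Real.sqrt (σ^2 + 4*a*c*k))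
    (hvk : ∀ᶠ t in atTop, k < v t) :
    ∀ᶠ t in atTop, Fm a c σ k - ε < v t := by
  have hs0' : 0 ≤ Real.sqrt (σ^2 + 4*a*c*k) := Real.sqrt_nonneg _
  have hs2' : (Real.sqrt (σ^2 + 4*a*c*k))^2 = σ^2 + 4*a*c*k :=
    Real.sq_sqrt (by nlinarith [sq_nonneg σ, mul_pos (mul_pos ha hc) hk])
  have hFm : Fm a c σ k = (σ + Real.sqrt (σ^2 + 4*a*c*k)) / (2*c) := rfl
  obtain ⟨s, hs⟩ : ∃ s, Real.sqrt (σ^2 + 4*a*c*k) = s := ⟨_, rfl⟩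
  rw [hs] at hs0' hs2' hFm hεs
  rw [hFm]
  obtain ⟨m, hmdef⟩ : ∃ x : ℝ, x = (σ + s) / (2*c) - ε := ⟨_, rfl⟩
  rw [← hmdef]
  have hm : 2*c*m = σ + s - 2*c*ε := by rw [hmdef]; field_simp
  rcases le_or_gt m k with hmk | hkm
  · filter_upwards [hvk] with t ht; linarith
  · have hmpos : 0 < m := lt_trans hk hkm
    obtain ⟨T₀, hT₀⟩ := eventually_atTop.1 hvk
    obtain ⟨T, hTdef⟩ : ∃ x : ℝ, x = max T₀ 0 + h := ⟨_, rfl⟩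
    have hT0 : 0 ≤ T := by rw [hTdef]; positivity
    obtain ⟨η, hηdef⟩ : ∃ x : ℝ, x = min (a*k) (ε * (s - c*ε)) := ⟨_, rfl⟩
    have hη : 0 < η := by rw [hηdef]; exact lt_min (by positivity) (by nlinarith)
    obtain ⟨b₁, hb₁def⟩ : ∃ x : ℝ, x = min δ m / 2 := ⟨_, rfl⟩
    have hb₁m : b₁ < m := by
      have : min δ m ≤ m := min_le_right _ _
      rw [hb₁def]; linarith
    apply eventually_above v (fun t => a * v (t - h) + σ * v t - c * v t ^ 2) T m b₁ η hb₁m hη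
    · exact hvc.mono (fun x hx => le_trans (by rw [hTdef]; linarith [le_max_right T₀ (0:ℝ)] : -h ≤ T) hx)
    · intro t ht
      exact hv t (lt_of_le_of_lt hT0 ht)
    · intro t ht
      have h1 : δ ≤ v t := hvδ t (le_trans hT0 ht)
      have : min δ m ≤ δ := min_le_left _ _
      rw [hb₁def]; linarith
    · intro t ht hmt
      have hdel : k < v (t - h) := hT₀ (t - h) (by
        rw [hTdef] at ht
        have : max T₀ 0 < t - h := by linarith
        linarith [le_max_left T₀ (0:ℝ)])
      have hy0 : 0 ≤ v t := le_trans hδ.le (hvδ t (le_trans hT0 ht.le))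
      have hη1 : η ≤ a*k := hηdef ▸ min_le_left _ _
      have hη2 : η ≤ ε * (s - c*ε) := hηdef ▸ min_le_right _ _
      have hqm : a*k + σ*m - c*m^2 = ε*(s - c*ε) := by
        have hsm : s = 2*c*m - σ + 2*c*ε := by linarith
        rw [hsm] at hs2'
        have hq4 : (4*c) * (a*k + σ*m - c*m^2) = (4*c) * (ε*(s - c*ε)) := by
          rw [hsm]; linear_combination -1 * hs2'
        exact mul_left_cancel₀ (by positivity) hq4
      have hkey : η ≤ a*k + σ * v t - c * v t ^ 2 := by
        have e1 : 0 ≤ (m - v t) * (a*k - η) := mul_nonneg (by linarith) (by linarith)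
        have e2 : 0 ≤ v t * ((a*k + σ*m - c*m^2) - η) := by
          rw [hqm]; exact mul_nonneg hy0 (by linarith)
        have e3 : 0 ≤ c * m * (v t * (m - v t)) :=
          mul_nonneg (by positivity) (mul_nonneg hy0 (by linarith))
        have hid : m * ((a*k + σ * v t - c * v t ^ 2) - η) =
            (m - v t) * (a*k - η) + v t * ((a*k + σ*m - c*m^2) - η)
              + c * m * (v t * (m - v t)) := by ring
        have hsum : 0 ≤ m * ((a*k + σ * v t - c * v t ^ 2) - η) := by
          rw [hid]; linarith
        by_contra hneg
        push_neg at hneg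
        nlinarith [mul_pos hmpos (show (0:ℝ) < η - (a*k + σ * v t - c * v t ^ 2) by linarith)]
      have he2 : a * k < a * v (t - h) := mul_lt_mul_of_pos_left hdel ha
      show η ≤ a * v (t - h) + σ * v t - c * v t ^ 2
      linarith


set_option maxHeartbeats 1000000 in
/-- **Global stability of the positive equilibrium of the delay logistic equation.**
For `a, c > 0`, `a + σ > 0`, every continuous solution of `v' = a v(·-h) + σ v - c v²`
with nonnegative initial function and `φ(0) = v(0) > 0` stays positive and converges to
`(a + σ)/c`, which is the unique positive equilibrium. -/
theorem delay_logistic_global_stability (a c h σ : ℝ) (ha : 0 < a) (hc : 0 < c)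
    (hh : 0 < h) (haσ : 0 < a + σ)
    (v : ℝ → ℝ) (hvc : ContinuousOn v (Set.Ici (-h)))
    (hvnn : ∀ θ ∈ Set.Icc (-h) (0:ℝ), 0 ≤ v θ) (hv0 : 0 < v 0)
    (hv : ∀ s : ℝ, 0 < s → HasDerivAt v (a * v (s - h) + σ * v s - c * v s ^ 2) s) :
    (∀ s : ℝ, 0 < s → 0 < v s) ∧
      Tendsto v atTop (nhds ((a + σ) / c)) ∧
      ∀ e : ℝ, 0 < e → (a * e + σ * e - c * e ^ 2 = 0 ↔ e = (a + σ) / c) := by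
  have hxpos : 0 < (a + σ) / c := div_pos haσ hc
  set Dv : ℝ → ℝ := fun t => a * v (t - h) + σ * v t - c * v t ^ 2 with hDv
  have hvD : ∀ t, 0 < t → HasDerivAt v (Dv t) t := fun t ht => hv t ht
  -- global upper bound
  have hcpt : IsCompact (v '' Icc (-h) 0) :=
    isCompact_Icc.image_of_continuousOn (hvc.mono Icc_subset_Ici_self)
  obtain ⟨B₀, hB₀⟩ := hcpt.bddAbove
  obtain ⟨B₁, hB₁def⟩ : ∃ x : ℝ, x = max B₀ ((a+σ)/c) + 1 := ⟨_, rfl⟩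
  have hxB₁ : (a+σ)/c + 1 ≤ B₁ := by
    have := le_max_right B₀ ((a+σ)/c); rw [hB₁def]; linarith
  have hB₁pos : 0 < B₁ := by linarith
  have hcB₁ : a + σ < c * B₁ := by
    have := (div_lt_iff₀ hc).1 (show (a+σ)/c < B₁ by linarith)
    linarith
  have hB₁ : ∀ t, -h ≤ t → v t < B₁ := by
    apply no_upcross v Dv (-h) 0 B₁ (by linarith) hvc hvD
    · intro t ht
      have : v t ≤ B₀ := hB₀ ⟨t, ht, rfl⟩
      have := le_max_left B₀ ((a+σ)/c)
      rw [hB₁def]; linarith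
    · intro t ht hpre hveq
      have hdel : v (t - h) < B₁ := hpre (t - h) ⟨by linarith, by linarith⟩
      show a * v (t - h) + σ * v t - c * v t ^ 2 < 0
      rw [hveq]
      nlinarith [mul_lt_mul_of_pos_left hdel ha, mul_pos hB₁pos (sub_pos.2 hcB₁)]
  -- positivity
  have hpos : ∀ s : ℝ, 0 < s → 0 < v s := by
    by_contra hcon
    push_neg at hcon
    obtain ⟨t₁, ht₁, hvt₁⟩ := hcon
    set S : Set ℝ := Ici 0 ∩ v ⁻¹' (Iic 0) with hS
    have hSne : S.Nonempty := ⟨t₁, ht₁.le, hvt₁⟩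
    have hSbdd : BddBelow S := ⟨0, fun x hx => hx.1⟩
    have hScl : IsClosed S :=
      (hvc.mono (fun x (hx : 0 ≤ x) => by simp only [mem_Ici]; linarith)
        ).preimage_isClosed_of_isClosed isClosed_Ici isClosed_Iic
    set t₀ := sInf S with ht₀def
    have ht₀S : t₀ ∈ S := hScl.csInf_mem hSne hSbdd
    have ht₀0 : 0 ≤ t₀ := ht₀S.1
    have ht₀v : v t₀ ≤ 0 := ht₀S.2
    have ht₀pos : 0 < t₀ := by
      rcases eq_or_lt_of_le ht₀0 with heq | hlt
      · exfalso; rw [← heq] at ht₀v; linarith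
      · exact hlt
    have hbefore : ∀ s ∈ Ico (0:ℝ) t₀, 0 < v s := by
      intro s hs
      by_contra hge
      push_neg at hge
      exact absurd (csInf_le hSbdd ⟨hs.1, hge⟩) (not_le.2 hs.2)
    obtain ⟨K, hKdef⟩ : ∃ x : ℝ, x = |σ| + c * B₁ := ⟨_, rfl⟩
    set w : ℝ → ℝ := fun t => v t * Real.exp (K * t) with hw
    have hmono : MonotoneOn w (Icc 0 t₀) := by
      apply monotoneOn_of_deriv_nonneg (convex_Icc _ _)
      · exact ((hvc.mono (fun x (hx : x ∈ Icc 0 t₀) => by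
          simp only [mem_Ici]; linarith [hx.1])).mul
          (Real.continuous_exp.comp (continuous_const.mul continuous_id)).continuousOn)
      · intro x hx
        rw [interior_Icc] at hx
        exact ((hvD x hx.1).mul
          (((hasDerivAt_id x).const_mul K).exp)).differentiableAt.differentiableWithinAt
      · intro x hx
        rw [interior_Icc] at hx
        have hdx : HasDerivAt w (Dv x * Real.exp (K * x) + v x * (Real.exp (K * x) * (K * 1))) x :=
          (hvD x hx.1).mul (((hasDerivAt_id x).const_mul K).exp)
        rw [hdx.deriv]
        have hvx : 0 < v x := hbefore x ⟨hx.1.le, hx.2⟩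
        have hvxB : v x < B₁ := hB₁ x (by linarith [hx.1])
        have hvd : 0 ≤ v (x - h) := by
          rcases le_or_gt (x - h) 0 with hle | hlt
          · exact hvnn (x - h) ⟨by linarith [hx.1], hle⟩
          · exact (hbefore (x - h) ⟨hlt.le, by linarith [hx.2]⟩).le
        have hexp : 0 < Real.exp (K * x) := Real.exp_pos _
        have hkey : 0 ≤ Dv x + K * v x := by
          show 0 ≤ a * v (x - h) + σ * v x - c * v x ^ 2 + K * v x
          rw [hKdef]
          nlinarith [neg_abs_le σ, mul_nonneg ha.le hvd, mul_pos hc hvx]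
        nlinarith
    have h1 := hmono (left_mem_Icc.2 ht₀0) (right_mem_Icc.2 ht₀0) ht₀0
    have h2 : w 0 = v 0 := by rw [hw]; simp
    have h3 : w t₀ ≤ 0 := by
      rw [hw]
      exact mul_nonpos_of_nonpos_of_nonneg ht₀v (Real.exp_pos _).le
    rw [h2] at h1
    linarith
  have hpos0 : ∀ t, 0 ≤ t → 0 < v t := by
    intro t ht
    rcases eq_or_lt_of_le ht with heq | hlt
    · rw [← heq]; exact hv0
    · exact hpos t hlt
  -- lower bound δ
  obtain ⟨xm, hxm_mem, hxm⟩ := (isCompact_Icc : IsCompact (Icc (0:ℝ) h)).exists_isMinOn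
    ⟨0, le_refl 0, hh.le⟩ (hvc.mono (fun x hx => by
      simp only [mem_Ici] at *; linarith [hx.1]))
  have hxmpos : 0 < v xm := hpos0 xm hxm_mem.1
  obtain ⟨δ, hδdef⟩ : ∃ x : ℝ, x = min (v xm) ((a+σ)/c) / 2 := ⟨_, rfl⟩
  have hδpos : 0 < δ := by
    rw [hδdef]; have := lt_min hxmpos hxpos; positivity
  have hδxm : δ < v xm := by
    have := min_le_left (v xm) ((a+σ)/c); rw [hδdef]; linarith
  have hδx : c * δ < a + σ := by
    have h1 : δ < (a+σ)/c := by
      have := min_le_right (v xm) ((a+σ)/c); rw [hδdef]; linarith [hxpos]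
    have := (lt_div_iff₀ hc).1 h1
    linarith
  have hδlow : ∀ t, 0 ≤ t → δ < v t := by
    apply no_downcross v Dv 0 h δ hh.le
      (hvc.mono (fun x (hx : 0 ≤ x) => by simp only [mem_Ici]; linarith))
      (fun t ht => hvD t (by linarith))
    · intro t ht
      exact lt_of_lt_of_le hδxm (hxm ht)
    · intro t ht hpre hveq
      have hdel : δ < v (t - h) := hpre (t - h) ⟨by linarith, by linarith⟩
      show 0 < a * v (t - h) + σ * v t - c * v t ^ 2
      rw [hveq]
      nlinarith [mul_lt_mul_of_pos_left hdel ha, mul_pos hδpos (sub_pos.2 hδx)]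
  have hlow : ∀ t, 0 ≤ t → δ ≤ v t := fun t ht => (hδlow t ht).le
  -- iteration sequences
  set F := Fm a c σ with hF
  have hFcont : Continuous F := Fm_cont ha hc
  have hδxstar : δ ≤ (a+σ)/c := by
    have h1 : δ * c ≤ a + σ := by linarith
    exact (le_div_iff₀ hc).2 h1
  have hB₁xstar : (a+σ)/c ≤ B₁ := by linarith
  set seqB : ℕ → ℝ := fun n => F^[n] B₁ with hseqB
  set seqd : ℕ → ℝ := fun n => F^[n] δ with hseqd
  have hseqB0 : seqB 0 = B₁ := rfl
  have hseqd0 : seqd 0 = δ := rfl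
  have hseqBsucc : ∀ n, seqB (n+1) = F (seqB n) := fun n => Function.iterate_succ_apply' F n B₁
  have hseqdsucc : ∀ n, seqd (n+1) = F (seqd n) := fun n => Function.iterate_succ_apply' F n δ
  have hBx : ∀ n, (a+σ)/c ≤ seqB n := by
    intro n
    induction n with
    | zero => exact hB₁xstar
    | succ n ih =>
      rw [hseqBsucc n]
      calc (a+σ)/c = F ((a+σ)/c) := (Fm_fixed ha hc haσ).symm
        _ ≤ F (seqB n) := Fm_mono ha hc ih
  have hdx : ∀ n, 0 < seqd n ∧ seqd n ≤ (a+σ)/c := by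
    intro n
    induction n with
    | zero => exact ⟨hδpos, hδxstar⟩
    | succ n ih =>
      rw [hseqdsucc n]
      refine ⟨Fm_pos ha hc ih.1, ?_⟩
      calc F (seqd n) ≤ F ((a+σ)/c) := Fm_mono ha hc ih.2
        _ = (a+σ)/c := Fm_fixed ha hc haσ
  have hBpos : ∀ n, 0 < seqB n := fun n => lt_of_lt_of_le hxpos (hBx n)
  have hBanti : Antitone seqB := by
    apply antitone_nat_of_succ_le
    intro n
    rw [hseqBsucc n]
    exact Fm_le_self ha hc haσ (hBx n)
  have hdmono : Monotone seqd := by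
    apply monotone_nat_of_le_succ
    intro n
    rw [hseqdsucc n]
    exact self_le_Fm ha hc haσ (hdx n).1 (hdx n).2
  -- limits of the sequences
  have hBlim : Tendsto seqB atTop (𝓝 ((a+σ)/c)) := by
    have hbdd : BddBelow (range seqB) := ⟨(a+σ)/c, by
      rintro x ⟨n, rfl⟩; exact hBx n⟩
    have h1 := tendsto_atTop_ciInf hBanti hbdd
    have hLx : (a+σ)/c ≤ ⨅ n, seqB n := le_ciInf (fun n => hBx n)
    have h2 : Tendsto (fun n => seqB (n+1)) atTop (𝓝 (⨅ n, seqB n)) :=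
      h1.comp (tendsto_add_atTop_nat 1)
    have h3 : Tendsto (fun n => F (seqB n)) atTop (𝓝 (F (⨅ n, seqB n))) :=
      (hFcont.tendsto _).comp h1
    have h2' : Tendsto (fun n => F (seqB n)) atTop (𝓝 (⨅ n, seqB n)) := by
      refine h2.congr (fun n => ?_)
      exact hseqBsucc n
    have hfix : F (⨅ n, seqB n) = ⨅ n, seqB n := tendsto_nhds_unique h3 h2'
    have : (⨅ n, seqB n) = (a+σ)/c :=
      Fm_fixed_unique ha hc haσ (lt_of_lt_of_le hxpos hLx) hfix
    rwa [this] at h1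
  have hdlim : Tendsto seqd atTop (𝓝 ((a+σ)/c)) := by
    have hbdd : BddAbove (range seqd) := ⟨(a+σ)/c, by
      rintro x ⟨n, rfl⟩; exact (hdx n).2⟩
    have h1 := tendsto_atTop_ciSup hdmono hbdd
    have hLx : (⨆ n, seqd n) ≤ (a+σ)/c := ciSup_le (fun n => (hdx n).2)
    have hLd : δ ≤ ⨆ n, seqd n := le_ciSup hbdd 0
    have h2 : Tendsto (fun n => seqd (n+1)) atTop (𝓝 (⨆ n, seqd n)) :=
      h1.comp (tendsto_add_atTop_nat 1)
    have h3 : Tendsto (fun n => F (seqd n)) atTop (𝓝 (F (⨆ n, seqd n))) :=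
      (hFcont.tendsto _).comp h1
    have h2' : Tendsto (fun n => F (seqd n)) atTop (𝓝 (⨆ n, seqd n)) := by
      refine h2.congr (fun n => ?_)
      exact hseqdsucc n
    have hfix : F (⨆ n, seqd n) = ⨆ n, seqd n := tendsto_nhds_unique h3 h2'
    have : (⨆ n, seqd n) = (a+σ)/c :=
      Fm_fixed_unique ha hc haσ (lt_of_lt_of_le hδpos hLd) hfix
    rwa [this] at h1
  -- eventual upper bounds
  have hup : ∀ n, ∀ ε : ℝ, 0 < ε → ∀ᶠ t in atTop, v t < seqB n + ε := by
    intro n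
    induction n with
    | zero =>
      intro ε hε
      refine eventually_atTop.2 ⟨0, fun t ht => ?_⟩
      have := hB₁ t (by linarith)
      rw [hseqB0]; linarith
    | succ n ih =>
      intro ε hε
      have hev : ∀ᶠ x in 𝓝 (seqB n), F x < F (seqB n) + ε/2 :=
        ((hFcont.tendsto (seqB n)).eventually_lt_const (by linarith))
      obtain ⟨ε₁, hε₁, hball⟩ := Metric.eventually_nhds_iff.1 hev
      have hKpos : 0 < seqB n + ε₁/2 := by linarith [hBpos n]
      have hFK : F (seqB n + ε₁/2) < F (seqB n) + ε/2 := by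
        apply hball
        rw [Real.dist_eq]
        rw [show seqB n + ε₁/2 - seqB n = ε₁/2 by ring, abs_of_pos (by linarith)]
        linarith
      have hstep := step_up a c h σ ha hc hh v hvc hv (seqB n + ε₁/2) (ε/2)
        hKpos (by linarith) (ih (ε₁/2) (by linarith))
      filter_upwards [hstep] with t ht
      rw [hseqBsucc n]
      have : Fm a c σ (seqB n + ε₁/2) = F (seqB n + ε₁/2) := rfl
      rw [this] at ht
      linarith
  -- eventual lower bounds
  have hdown : ∀ n, ∀ ε : ℝ, 0 < ε → ∀ᶠ t in atTop, seqd n - ε < v t := by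
    intro n
    induction n with
    | zero =>
      intro ε hε
      refine eventually_atTop.2 ⟨0, fun t ht => ?_⟩
      have := hδlow t (by linarith)
      rw [hseqd0]; linarith
    | succ n ih =>
      intro ε hε
      have hev : ∀ᶠ x in 𝓝 (seqd n), F (seqd n) - ε/2 < F x :=
        ((hFcont.tendsto (seqd n)).eventually_const_lt (by linarith))
      obtain ⟨ε₁, hε₁, hball⟩ := Metric.eventually_nhds_iff.1 hev
      have hdpos := (hdx n).1
      obtain ⟨k, hkdef⟩ : ∃ x : ℝ, x = seqd n - min ε₁ (seqd n) / 2 := ⟨_, rfl⟩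
      have hminpos : 0 < min ε₁ (seqd n) := lt_min hε₁ hdpos
      have hkpos : 0 < k := by
        rw [hkdef]
        have := min_le_right ε₁ (seqd n)
        linarith
      have hFk : F (seqd n) - ε/2 < F k := by
        apply hball
        rw [hkdef, Real.dist_eq]
        rw [show seqd n - min ε₁ (seqd n)/2 - seqd n = -(min ε₁ (seqd n)/2) by ring,
          abs_neg, abs_of_pos (by linarith)]
        have := min_le_left ε₁ (seqd n)
        linarith
      have hvk : ∀ᶠ t in atTop, k < v t := by
        have := ih (min ε₁ (seqd n) / 2) (by linarith)
        filter_upwards [this] with t ht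
        rw [hkdef]; linarith
      have hskpos : 0 < Real.sqrt (σ^2 + 4*a*c*k) :=
        Real.sqrt_pos.2 (by nlinarith [sq_nonneg σ, mul_pos (mul_pos ha hc) hkpos])
      obtain ⟨ε₂, hε₂def⟩ : ∃ x : ℝ, x = min (ε/2) (Real.sqrt (σ^2 + 4*a*c*k) / (2*c)) := ⟨_, rfl⟩
      have hε₂pos : 0 < ε₂ := by
        rw [hε₂def]
        exact lt_min (by linarith) (div_pos hskpos (by linarith))
      have hε₂s : c * ε₂ < Real.sqrt (σ^2 + 4*a*c*k) := by
        have h1 : ε₂ ≤ Real.sqrt (σ^2 + 4*a*c*k) / (2*c) := hε₂def ▸ min_le_right _ _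
        have h2 := (le_div_iff₀ (by linarith : (0:ℝ) < 2*c)).1 h1
        nlinarith
      have hstep := step_down a c h σ ha hc hh v hvc hv δ hδpos hlow k ε₂
        hkpos hε₂pos hε₂s hvk
      filter_upwards [hstep] with t ht
      rw [hseqdsucc n]
      have hFmk : Fm a c σ k = F k := rfl
      rw [hFmk] at ht
      have hε₂ε : ε₂ ≤ ε/2 := hε₂def ▸ min_le_left _ _
      linarith
  -- conclusion: convergence
  have htend : Tendsto v atTop (𝓝 ((a + σ) / c)) := by
    apply tendsto_order.2
    constructor
    · intro b hb
      obtain ⟨n, hn⟩ := (hdlim.eventually_const_lt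
        (show (b + (a+σ)/c)/2 < (a+σ)/c by linarith)).exists
      have hε : 0 < seqd n - b := by linarith
      filter_upwards [hdown n (seqd n - b) hε] with t ht
      linarith
    · intro b hb
      obtain ⟨n, hn⟩ := (hBlim.eventually_lt_const
        (show (a+σ)/c < (b + (a+σ)/c)/2 by linarith)).exists
      have hε : 0 < b - seqB n := by linarith
      filter_upwards [hup n (b - seqB n) hε] with t ht
      linarith
  refine ⟨hpos, htend, ?_⟩
  intro e he
  constructor
  · intro heq
    have h1 : e * (a + σ) = e * (c * e) := by ring_nf; ring_nf at heq; linarith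
    have h2 : a + σ = c * e := mul_left_cancel₀ (ne_of_gt he) h1
    field_simp [h2]
    linarith [h2, mul_comm e c]
  · intro heq
    rw [heq]
    field_simp
    ring
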